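/- Let 0 < a < b, ρ > 0, 0 ≤ γ < 1, α > 0 with α > γ, and let φ be a function on (a,b] such that x ↦ ((x^ρ - a^ρ)/ρ)^γ φ(x) extends continuously to [a,b]. Then lim_{x→a+} (ρJ_{a+}^α φ)(x) = 0. -/

import Mathlib

open Real MeasureTheory Set Filter Topology

/-- Generalized (Katugampola) fractional integral; identity for `α = 0`. -/
noncomputable def igral (ρ α a : ℝ) (φ : ℝ → ℝ) (x : ℝ) : ℝ :=
  if α = 0 then φ x
  else ρ ^ (1 - α) / Real.Gamma α * ∫ t in a..x, t ^ (ρ - 1) * φ t * (x ^ ρ - t ^ ρ) ^ (α - 1)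

/-- Generalized (Katugampola) fractional derivative of order `α ∈ (0,1)`. -/
noncomputable def genD (ρ α a : ℝ) (φ : ℝ → ℝ) (x : ℝ) : ℝ :=
  x ^ (1 - ρ) * deriv (igral ρ (1 - α) a φ) x

/-- Hilfer–Katugampola fractional derivative of order `α` and type `β`. -/
noncomputable def hkD (ρ α β a : ℝ) (φ : ℝ → ℝ) : ℝ → ℝ :=
  igral ρ (β * (1 - α)) a
    (fun s => s ^ (1 - ρ) * deriv (igral ρ ((1 - β) * (1 - α)) a φ) s)

/-- Membership in the weighted space `C_{γ,ρ}[a,b]`. -/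
def MemW (ρ γ a b : ℝ) (φ : ℝ → ℝ) : Prop :=
  ∃ h : ℝ → ℝ, ContinuousOn h (Icc a b) ∧
    ∀ x ∈ Ioc a b, h x = ((x ^ ρ - a ^ ρ) / ρ) ^ γ * φ x

/-- Weighted sup-norm on `C_{γ,ρ}[a,b]`. -/
noncomputable def wnorm (ρ γ a b : ℝ) (φ : ℝ → ℝ) : ℝ :=
  sSup ((fun x => |((x ^ ρ - a ^ ρ) / ρ) ^ γ * φ x|) '' Ioc a b)

lemma beta_intble {α γ : ℝ} (hγ : γ < 1) (hα : 0 < α) :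
    IntegrableOn (fun s : ℝ => s ^ (-γ) * (1 - s) ^ (α - 1)) (Ioo 0 1) volume := by
  have h := Complex.betaIntegral_convergent (u := (1 - γ : ℝ)) (v := (α : ℝ))
    (by simp; linarith) (by simpa using hα)
  rw [intervalIntegrable_iff_integrableOn_Ioo_of_le (by norm_num)] at h
  refine IntegrableOn.congr_fun h.norm ?_ measurableSet_Ioo
  intro x hx
  simp only [norm_mul]
  have h1 : ((1 - γ : ℝ) : ℂ) - 1 = ((-γ : ℝ) : ℂ) := by push_cast; ring
  have h2 : ((α : ℝ) : ℂ) - 1 = ((α - 1 : ℝ) : ℂ) := by push_cast; ring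
  have h3 : (1 : ℂ) - (x : ℂ) = ((1 - x : ℝ) : ℂ) := by push_cast; ring
  rw [h1, h3, h2, Complex.norm_cpow_eq_rpow_re_of_pos hx.1,
    Complex.norm_cpow_eq_rpow_re_of_pos (by simp; linarith [hx.2])]
  simp

lemma rpow_image {ρ a x : ℝ} (hρ : 0 < ρ) (ha : 0 < a) (hax : a < x) :
    (fun t : ℝ => t ^ ρ) '' Ioo a x = Ioo (a ^ ρ) (x ^ ρ) := by
  ext u
  constructor
  · rintro ⟨t, ht, rfl⟩
    exact ⟨Real.rpow_lt_rpow ha.le ht.1 hρ,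
      Real.rpow_lt_rpow (ha.trans ht.1).le ht.2 hρ⟩
  · intro hu
    have hu0 : 0 < u := (Real.rpow_pos_of_pos ha ρ).trans hu.1
    refine ⟨u ^ ρ⁻¹, ⟨?_, ?_⟩, Real.rpow_inv_rpow hu0.le hρ.ne'⟩
    · calc a = (a ^ ρ) ^ ρ⁻¹ := (Real.rpow_rpow_inv ha.le hρ.ne').symm
        _ < u ^ ρ⁻¹ := Real.rpow_lt_rpow (Real.rpow_pos_of_pos ha ρ).le hu.1 (by positivity)
    · calc u ^ ρ⁻¹ < (x ^ ρ) ^ ρ⁻¹ := Real.rpow_lt_rpow hu0.le hu.2 (by positivity)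
        _ = x := Real.rpow_rpow_inv (ha.trans hax).le hρ.ne'

/-- The generalized fractional integral of a function in the weighted space
tends to zero at `a` when `α > γ`. -/
theorem igral_tendsto_zero (ρ a b α γ : ℝ) (φ : ℝ → ℝ) (ha : 0 < a) (hab : a < b)
    (hρ : 0 < ρ) (hγ0 : 0 ≤ γ) (hγ1 : γ < 1) (hα : 0 < α) (hαγ : γ < α)
    (hφ : MemW ρ γ a b φ) :
    Tendsto (igral ρ α a φ) (𝓝[>] a) (𝓝 0) := by
  obtain ⟨h, hc, hh⟩ := hφ
  obtain ⟨M, hM⟩ := isCompact_Icc.exists_bound_of_continuousOn hc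
  have hM0 : 0 ≤ M := le_trans (norm_nonneg _) (hM a ⟨le_refl a, hab.le⟩)
  set K := ∫ s in Ioo (0 : ℝ) 1, s ^ (-γ) * (1 - s) ^ (α - 1) with hKdef
  have hK0 : 0 ≤ K := setIntegral_nonneg measurableSet_Ioo fun s hs =>
    mul_nonneg (Real.rpow_nonneg hs.1.le _) (Real.rpow_nonneg (by linarith [hs.2]) _)
  have hΓ : 0 < Real.Gamma α := Real.Gamma_pos_of_pos hα
  set Cst := ρ ^ (1 - α) / Real.Gamma α * (M * ((1 / ρ) * (ρ ^ γ * K))) with hCdef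
  have key : ∀ x ∈ Ioc a b, ‖igral ρ α a φ x‖ ≤ Cst * (x ^ ρ - a ^ ρ) ^ (α - γ) := by
    intro x hx
    obtain ⟨hax, hxb⟩ := hx
    set A := a ^ ρ with hAdef
    set X := x ^ ρ with hXdef
    have hA0 : 0 < A := Real.rpow_pos_of_pos ha ρ
    have hAX : A < X := Real.rpow_lt_rpow ha.le hax hρ
    set c := X - A with hcdef
    have hc0 : 0 < c := sub_pos.2 hAX
    set G : ℝ → ℝ := fun u => ((u - A) / ρ) ^ (-γ) * (X - u) ^ (α - 1) with hGdef
    set g : ℝ → ℝ := fun t =>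
      t ^ (ρ - 1) * ((t ^ ρ - A) / ρ) ^ (-γ) * (X - t ^ ρ) ^ (α - 1) with hgdef
    -- affine substitution
    have haff_im : (fun s : ℝ => A + s * c) '' Ioo 0 1 = Ioo A X := by
      have h1 : (fun s : ℝ => A + s * c) = (fun y : ℝ => A + y) ∘ fun s : ℝ => s * c := rfl
      rw [h1, image_comp, image_mul_right_Ioo 0 1 hc0, image_const_add_Ioo]
      norm_num [hcdef]
    have haff_d : ∀ s ∈ Ioo (0 : ℝ) 1,
        HasDerivWithinAt (fun s : ℝ => A + s * c) c (Ioo 0 1) s :=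
      fun s _ => ((hasDerivAt_mul_const c).const_add A).hasDerivWithinAt
    have haff_inj : InjOn (fun s : ℝ => A + s * c) (Ioo 0 1) := by
      intro u _ v _ huv
      simp only [add_right_inj] at huv
      exact mul_right_cancel₀ hc0.ne' huv
    have hcomp : ∀ s ∈ Ioo (0 : ℝ) 1, |c| • G (A + s * c)
        = c * ((c / ρ) ^ (-γ) * c ^ (α - 1)) * (s ^ (-γ) * (1 - s) ^ (α - 1)) := by
      intro s hs
      have hs0 : (0 : ℝ) ≤ s := hs.1.le
      have hs1 : (0 : ℝ) ≤ 1 - s := by linarith [hs.2]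
      have e1 : A + s * c - A = s * c := by ring
      have e2 : X - (A + s * c) = c * (1 - s) := by rw [hcdef]; ring
      have e3 : s * c / ρ = s * (c / ρ) := by ring
      rw [smul_eq_mul, hGdef]
      simp only
      rw [e1, e2, e3, Real.mul_rpow hs0 (by positivity), Real.mul_rpow hc0.le hs1,
        abs_of_pos hc0]
      ring
    have hGint : IntegrableOn G (Ioo A X) := by
      rw [← haff_im, integrableOn_image_iff_integrableOn_abs_deriv_smul measurableSet_Ioo
        haff_d haff_inj]
      refine IntegrableOn.congr_fun ((beta_intble hγ1 hα).const_mul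
        (c * ((c / ρ) ^ (-γ) * c ^ (α - 1)))) ?_ measurableSet_Ioo
      intro s hs
      exact (hcomp s hs).symm
    have hGval : ∫ u in Ioo A X, G u = c * ((c / ρ) ^ (-γ) * c ^ (α - 1)) * K := by
      rw [← haff_im, integral_image_eq_integral_abs_deriv_smul measurableSet_Ioo
        haff_d haff_inj, setIntegral_congr_fun measurableSet_Ioo hcomp,
        MeasureTheory.integral_const_mul]
    -- rpow substitution
    have hrim : (fun t : ℝ => t ^ ρ) '' Ioo a x = Ioo A X := rpow_image hρ ha hax
    have hrd : ∀ t ∈ Ioo a x,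
        HasDerivWithinAt (fun t : ℝ => t ^ ρ) (ρ * t ^ (ρ - 1)) (Ioo a x) t :=
      fun t ht => (Real.hasDerivAt_rpow_const (Or.inl (ha.trans ht.1).ne')).hasDerivWithinAt
    have hrinj : InjOn (fun t : ℝ => t ^ ρ) (Ioo a x) := by
      intro u hu v hv huv
      simp only at huv
      rw [← Real.rpow_rpow_inv (ha.trans hu.1).le hρ.ne',
        ← Real.rpow_rpow_inv (ha.trans hv.1).le hρ.ne', huv]
    have hcomp2 : ∀ t ∈ Ioo a x, |ρ * t ^ (ρ - 1)| • G (t ^ ρ) = ρ * g t := by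
      intro t ht
      have ht0 : 0 < t := ha.trans ht.1
      have habs : |ρ * t ^ (ρ - 1)| = ρ * t ^ (ρ - 1) :=
        abs_of_pos (by positivity)
      rw [smul_eq_mul, habs, hGdef, hgdef]
      simp only
      ring
    have hgint : IntegrableOn g (Ioo a x) := by
      have h1 : IntegrableOn (fun t => |ρ * t ^ (ρ - 1)| • G (t ^ ρ)) (Ioo a x) := by
        rw [← integrableOn_image_iff_integrableOn_abs_deriv_smul measurableSet_Ioo hrd hrinj,
          hrim]
        exact hGint
      refine IntegrableOn.congr_fun (h1.const_mul (1 / ρ)) ?_ measurableSet_Ioo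
      intro t ht
      show 1 / ρ * (|ρ * t ^ (ρ - 1)| • G (t ^ ρ)) = g t
      rw [hcomp2 t ht]
      field_simp
    have hgval : ∫ t in Ioo a x, g t
        = (1 / ρ) * (c * ((c / ρ) ^ (-γ) * c ^ (α - 1)) * K) := by
      have h1 : ∫ u in Ioo A X, G u = ∫ t in Ioo a x, |ρ * t ^ (ρ - 1)| • G (t ^ ρ) := by
        rw [← hrim]
        exact integral_image_eq_integral_abs_deriv_smul measurableSet_Ioo hrd hrinj G
      rw [setIntegral_congr_fun measurableSet_Ioo hcomp2,
        MeasureTheory.integral_const_mul] at h1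
      rw [h1] at hGval
      field_simp at hGval ⊢
      linarith [hGval]
    -- pointwise bound
    have hptwise : ∀ t ∈ Ioo a x,
        ‖t ^ (ρ - 1) * φ t * (X - t ^ ρ) ^ (α - 1)‖ ≤ M * g t := by
      intro t ht
      have ht0 : 0 < t := ha.trans ht.1
      have htA : A < t ^ ρ := Real.rpow_lt_rpow ha.le ht.1 hρ
      have htX : t ^ ρ < X := Real.rpow_lt_rpow ht0.le ht.2 hρ
      have htA' : (0 : ℝ) < (t ^ ρ - A) / ρ := div_pos (sub_pos.2 htA) hρ
      have hw0 : (0 : ℝ) < ((t ^ ρ - A) / ρ) ^ γ :=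
        Real.rpow_pos_of_pos htA' γ
      have hht := hh t ⟨ht.1, ht.2.le.trans hxb⟩
      have hphi : |φ t| = |h t| / ((t ^ ρ - A) / ρ) ^ γ := by
        rw [hht, abs_mul, abs_of_pos hw0]
        field_simp
      have hMt : |h t| ≤ M := by
        have := hM t ⟨ht.1.le, ht.2.le.trans hxb⟩
        simpa using this
      rw [Real.norm_eq_abs, abs_mul, abs_mul,
        abs_of_pos (Real.rpow_pos_of_pos ht0 (ρ - 1)),
        abs_of_pos (Real.rpow_pos_of_pos (by linarith : (0:ℝ) < X - t ^ ρ) (α - 1)), hphi]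
      have hinv : ((t ^ ρ - A) / ρ) ^ (-γ) = (((t ^ ρ - A) / ρ) ^ γ)⁻¹ :=
        Real.rpow_neg htA'.le γ
      rw [hgdef]
      simp only
      rw [hinv]
      rw [div_eq_mul_inv]
      have h2 : t ^ (ρ - 1) * (|h t| * (((t ^ ρ - A) / ρ) ^ γ)⁻¹) * (X - t ^ ρ) ^ (α - 1)
          ≤ t ^ (ρ - 1) * (M * (((t ^ ρ - A) / ρ) ^ γ)⁻¹) * (X - t ^ ρ) ^ (α - 1) := by
        refine mul_le_mul_of_nonneg_right (mul_le_mul_of_nonneg_left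
          (mul_le_mul_of_nonneg_right hMt (inv_nonneg.2 hw0.le))
          (Real.rpow_pos_of_pos ht0 (ρ - 1)).le)
          (Real.rpow_nonneg (by linarith : (0:ℝ) ≤ X - t ^ ρ) _)
      calc t ^ (ρ - 1) * (|h t| * (((t ^ ρ - A) / ρ) ^ γ)⁻¹) * (X - t ^ ρ) ^ (α - 1)
          ≤ t ^ (ρ - 1) * (M * (((t ^ ρ - A) / ρ) ^ γ)⁻¹) * (X - t ^ ρ) ^ (α - 1) := h2
        _ = M * (t ^ (ρ - 1) * (((t ^ ρ - A) / ρ) ^ γ)⁻¹ * (X - t ^ ρ) ^ (α - 1)) := by ring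
    have hMgint : IntervalIntegrable (fun t => M * g t) volume a x := by
      rw [intervalIntegrable_iff_integrableOn_Ioo_of_le hax.le]
      exact hgint.const_mul M
    have hae : ∀ᵐ t ∂(volume.restrict (Set.uIoc a x)),
        ‖t ^ (ρ - 1) * φ t * (X - t ^ ρ) ^ (α - 1)‖ ≤ M * g t := by
      rw [uIoc_of_le hax.le, ← Measure.restrict_congr_set Ioo_ae_eq_Ioc]
      filter_upwards [ae_restrict_mem measurableSet_Ioo] with t ht using hptwise t ht
    have hest := intervalIntegral.norm_integral_le_abs_of_norm_le hae hMgint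
    have hval2 : ∫ t in a..x, M * g t
        = M * ((1 / ρ) * (c * ((c / ρ) ^ (-γ) * c ^ (α - 1)) * K)) := by
      rw [intervalIntegral.integral_of_le hax.le, ← Measure.restrict_congr_set Ioo_ae_eq_Ioc,
        MeasureTheory.integral_const_mul, hgval]
    have hpow : c * ((c / ρ) ^ (-γ) * c ^ (α - 1)) = ρ ^ γ * c ^ (α - γ) := by
      have e1 : (c / ρ) ^ (-γ) = ρ ^ γ / c ^ γ := by
        rw [Real.div_rpow hc0.le hρ.le, Real.rpow_neg hc0.le, Real.rpow_neg hρ.le]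
        field_simp
      have e2 : c * c ^ (α - 1) = c ^ α := by
        have e := Real.rpow_add hc0 1 (α - 1)
        rw [Real.rpow_one] at e
        rw [← e]
        norm_num
      have e3 : c ^ (α - γ) = c ^ α / c ^ γ := Real.rpow_sub hc0 α γ
      rw [e1, e3, ← e2]
      ring
    -- assemble
    rw [igral, if_neg hα.ne']
    rw [norm_mul, Real.norm_eq_abs (ρ ^ (1 - α) / Real.Gamma α),
      abs_of_pos (by positivity : (0:ℝ) < ρ ^ (1 - α) / Real.Gamma α)]
    have hfinal : ‖∫ t in a..x, t ^ (ρ - 1) * φ t * (X - t ^ ρ) ^ (α - 1)‖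
        ≤ M * ((1 / ρ) * (ρ ^ γ * c ^ (α - γ) * K)) := by
      refine le_trans hest ?_
      have hnn : (0:ℝ) ≤ M * (1 / ρ * (c * ((c / ρ) ^ (-γ) * c ^ (α - 1)) * K)) := by
        refine mul_nonneg hM0 (mul_nonneg (by positivity) (mul_nonneg (mul_nonneg hc0.le
          (mul_nonneg (Real.rpow_nonneg (by positivity) _)
            (Real.rpow_nonneg hc0.le _))) hK0))
      rw [hval2, abs_of_nonneg hnn, hpow]
    calc ρ ^ (1 - α) / Real.Gamma α * ‖∫ t in a..x, t ^ (ρ - 1) * φ t * (X - t ^ ρ) ^ (α - 1)‖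
        ≤ ρ ^ (1 - α) / Real.Gamma α * (M * ((1 / ρ) * (ρ ^ γ * c ^ (α - γ) * K))) :=
          mul_le_mul_of_nonneg_left hfinal (by positivity)
      _ = Cst * c ^ (α - γ) := by rw [hCdef]; ring
  -- conclude by squeezing
  have htend : Tendsto (fun x : ℝ => Cst * (x ^ ρ - a ^ ρ) ^ (α - γ)) (𝓝[>] a) (𝓝 0) := by
    have h1 : Tendsto (fun x : ℝ => x ^ ρ - a ^ ρ) (𝓝[>] a) (𝓝 0) := by
      have h2 : ContinuousAt (fun x : ℝ => x ^ ρ - a ^ ρ) a :=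
        (Real.continuousAt_rpow_const a ρ (Or.inl ha.ne')).sub continuousAt_const
      have h3 := h2.tendsto
      rw [sub_self] at h3
      exact h3.mono_left nhdsWithin_le_nhds
    have h4 : Tendsto (fun y : ℝ => y ^ (α - γ)) (𝓝 0) (𝓝 0) := by
      have h5 := (Real.continuousAt_rpow_const 0 (α - γ) (Or.inr (by linarith))).tendsto
      rwa [Real.zero_rpow (by linarith : α - γ ≠ 0)] at h5
    have h6 := (h4.comp h1).const_mul Cst
    simpa using h6
  refine squeeze_zero_norm' ?_ htend
  filter_upwards [Ioc_mem_nhdsGT hab] with x hx using key x hx
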